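/- Let h: Z → Z be the translation i ↦ i+1 and let f be a permutation of Z restricting to an infinite cycle on the positive integers and fixing all other integers. Then the group generated by f and h acts infinitely transitively on Z. -/

import Mathlib

/-- With h the shift i ↦ i+1 and f an infinite cycle on the positive integers fixing
the rest, the group generated by f and h acts infinitely transitively on ℤ. -/
theorem stmt_7 (h f : Equiv.Perm ℤ)
    (hh : ∀ i : ℤ, h i = i + 1)
    (hfix : ∀ i : ℤ, i ≤ 0 → f i = i)
    (hcyc : ∀ x y : ℤ, 0 < x → 0 < y → ∃ k : ℤ, (f ^ k) x = y) :
    ∀ (m : ℕ) (a b : Fin m → ℤ), Function.Injective a → Function.Injective b →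
      ∃ g ∈ Subgroup.closure {f, h}, ∀ i, g (a i) = b i := by
  set G := Subgroup.closure ({f, h} : Set (Equiv.Perm ℤ)) with hG
  have hfG : f ∈ G := Subgroup.subset_closure (Set.mem_insert _ _)
  have hhG : h ∈ G := Subgroup.subset_closure (Set.mem_insert_of_mem _ rfl)
  -- h⁻¹
  have hinv1 : ∀ i : ℤ, h⁻¹ i = i - 1 := by
    intro i
    apply h.injective
    rw [Equiv.Perm.coe_inv, Equiv.apply_symm_apply, hh]; ring
  -- powers of h
  have hzpow : ∀ (n : ℤ) (i : ℤ), (h ^ n) i = i + n := by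
    intro n
    induction n using Int.induction_on with
    | zero => intro i; simp
    | succ k ih =>
        intro i
        have : h ^ ((k : ℤ) + 1) = h ^ (k : ℤ) * h := zpow_add_one h k
        rw [this, Equiv.Perm.mul_apply, hh, ih]; ring
    | pred k ih =>
        intro i
        have : h ^ (-(k : ℤ) - 1) = h ^ (-(k : ℤ)) * h⁻¹ := zpow_sub_one h _
        rw [this, Equiv.Perm.mul_apply, hinv1, ih]; ring
  have hzinv : ∀ (n : ℤ) (x : ℤ), (h ^ n)⁻¹ x = x - n := by
    intro n x
    apply (h ^ n).injective
    rw [Equiv.Perm.coe_inv, Equiv.apply_symm_apply, hzpow]; ring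
  -- f⁻¹ fixes nonpositives
  have hfinv : ∀ i : ℤ, i ≤ 0 → f⁻¹ i = i := by
    intro i hi
    have : f i = i := hfix i hi
    conv_lhs => rw [← this]
    rw [Equiv.Perm.coe_inv, Equiv.symm_apply_apply]
  -- powers of f fix nonpositives
  have hffix : ∀ (k : ℤ) (i : ℤ), i ≤ 0 → (f ^ k) i = i := by
    intro k
    induction k using Int.induction_on with
    | zero => intro i _; simp
    | succ k ih =>
        intro i hi
        rw [zpow_add_one, Equiv.Perm.mul_apply, hfix i hi, ih i hi]
    | pred k ih =>
        intro i hi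
        rw [zpow_sub_one, Equiv.Perm.mul_apply, hfinv i hi, ih i hi]
  -- powers of f preserve positives
  have hfpos : ∀ (k : ℤ) (i : ℤ), 0 < i → 0 < (f ^ k) i := by
    intro k i hi
    by_contra hcon
    push_neg at hcon
    have h1 : (f ^ (-k)) ((f ^ k) i) = (f ^ k) i := hffix (-k) _ hcon
    have h2 : (f ^ (-k)) ((f ^ k) i) = i := by
      rw [zpow_neg, Equiv.Perm.coe_inv, Equiv.symm_apply_apply]
    omega
  -- conjugates
  have hCk : ∀ (N k x : ℤ), ((h ^ N * f * (h ^ N)⁻¹) ^ k) x = (f ^ k) (x - N) + N := by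
    intro N k x
    have e : (h ^ N * f * (h ^ N)⁻¹) ^ k = h ^ N * f ^ k * (h ^ N)⁻¹ := by
      rw [← MulAut.conj_apply, ← map_zpow, MulAut.conj_apply]
    rw [e, Equiv.Perm.mul_apply, Equiv.Perm.mul_apply, hzinv, hzpow]
  have hCG : ∀ N : ℤ, (h ^ N * f * (h ^ N)⁻¹) ∈ G :=
    fun N => mul_mem (mul_mem (zpow_mem hhG N) hfG) (inv_mem (zpow_mem hhG N))
  -- key lemma
  have key : ∀ (m : ℕ) (a : Fin m → ℤ), Function.Injective a → (∀ i, 0 < a i) →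
      ∃ g ∈ G, (∀ i, g (a i) = (i : ℤ) + 1) ∧ ∀ x : ℤ, x ≤ 0 → g x = x := by
    intro m
    induction m with
    | zero =>
        intro a _ _
        exact ⟨1, one_mem G, fun i => i.elim0, fun x _ => rfl⟩
    | succ m ih =>
        intro a ha hpos
        obtain ⟨g, hgG, hg1, hg0⟩ := ih (a ∘ Fin.castSucc)
          (ha.comp (Fin.castSucc_injective m)) (fun i => hpos _)
        have hg1' : ∀ i : Fin m, g (a i.castSucc) = (i : ℤ) + 1 := hg1
        set z := g (a (Fin.last m)) with hz
        -- z is positive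
        have hzpos : 0 < z := by
          by_contra hcon
          push_neg at hcon
          have h1 : g z = z := hg0 z hcon
          have h2 : a (Fin.last m) = z := by
            have := g.injective (h1.trans hz)
            exact this.symm
          have := hpos (Fin.last m)
          omega
        -- z avoids 1..m
        have hzne : ∀ i : Fin m, z ≠ (i : ℤ) + 1 := by
          intro i hzi
          have heq : g (a (Fin.last m)) = g (a i.castSucc) :=
            hz.symm.trans (hzi.trans (hg1' i).symm)
          have := ha (g.injective heq)
          exact (Fin.castSucc_lt_last i).ne' this
        have hzm : (m : ℤ) < z := by
          by_contra hcon
          push_neg at hcon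
          have hlt : (z - 1).toNat < m := by omega
          have := hzne ⟨(z - 1).toNat, hlt⟩
          simp only [Fin.val_mk] at this
          omega
        obtain ⟨k, hk⟩ := hcyc (z - m) 1 (by omega) one_pos
        refine ⟨(h ^ (m : ℤ) * f * (h ^ (m : ℤ))⁻¹) ^ k * g,
          mul_mem (zpow_mem (hCG m) k) hgG, ?_, ?_⟩
        · intro i
          induction i using Fin.lastCases with
          | last =>
              rw [Equiv.Perm.mul_apply, ← hz, hCk, hk]
              simp [Fin.val_last]
              ring
          | cast i =>
              rw [Equiv.Perm.mul_apply, hg1' i, hCk]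
              have hcoe : ((i.castSucc : Fin (m+1)) : ℤ) = (i : ℤ) := by
                simp
              have hile : (i : ℤ) + 1 - m ≤ 0 := by
                have : (i : ℕ) < m := i.isLt
                omega
              rw [hffix k _ hile, hcoe]
              ring
        · intro x hx
          rw [Equiv.Perm.mul_apply, hg0 x hx, hCk,
            hffix k _ (by omega : x - (m : ℤ) ≤ 0)]
          ring
  -- main proof
  intro m a b ha hb
  set K : ℤ := 1 + (Finset.univ.sup (fun i => (-a i).toNat) : ℕ) with hKdef
  set L : ℤ := 1 + (Finset.univ.sup (fun i => (-b i).toNat) : ℕ) with hLdef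
  have hKpos : ∀ i, 0 < a i + K := by
    intro i
    have h1 : (-a i).toNat ≤ Finset.univ.sup (fun i => (-a i).toNat) :=
      Finset.le_sup (f := fun i => (-a i).toNat) (Finset.mem_univ i)
    omega
  have hLpos : ∀ i, 0 < b i + L := by
    intro i
    have h1 : (-b i).toNat ≤ Finset.univ.sup (fun i => (-b i).toNat) :=
      Finset.le_sup (f := fun i => (-b i).toNat) (Finset.mem_univ i)
    omega
  obtain ⟨ga, hgaG, hga1, _⟩ := key m (fun i => a i + K)
    (fun i j hij => ha (by dsimp at hij; omega)) hKpos
  obtain ⟨gb, hgbG, hgb1, _⟩ := key m (fun i => b i + L)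
    (fun i j hij => hb (by dsimp at hij; omega)) hLpos
  refine ⟨h ^ (-L) * gb⁻¹ * ga * h ^ K,
    mul_mem (mul_mem (mul_mem (zpow_mem hhG _) (inv_mem hgbG)) hgaG) (zpow_mem hhG _), ?_⟩
  intro i
  have e1 : (h ^ K) (a i) = a i + K := hzpow K _
  have e2 : ga (a i + K) = (i : ℤ) + 1 := hga1 i
  have e3 : gb⁻¹ ((i : ℤ) + 1) = b i + L := by
    rw [← hgb1 i, Equiv.Perm.coe_inv, Equiv.symm_apply_apply]
  rw [Equiv.Perm.mul_apply, Equiv.Perm.mul_apply, Equiv.Perm.mul_apply,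
    e1, e2, e3, hzpow]
  ring
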